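/- In any finite nonempty family of pairwise non-nested circles in the plane with a relation of orthogonality, the circle of minimum radius is orthogonal to at most 6 other circles of the family. -/

import Mathlib

open scoped Classical

/-- Two circles in `ℂ` whose distance between centers satisfies the triangle
inequalities have a common point. -/
lemma circles_intersect (a b : ℂ) (r₁ r₂ : ℝ) (h1 : 0 < r₁) (h2 : 0 < r₂)
    (hd : dist a b ≤ r₁ + r₂) (h3 : r₁ ≤ dist a b + r₂) (h4 : r₂ ≤ dist a b + r₁) :
    ∃ x : ℂ, dist x a = r₁ ∧ dist x b = r₂ := by
  set d : ℝ := dist a b with hddef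
  have hd0 : 0 ≤ d := dist_nonneg
  rcases eq_or_lt_of_le hd0 with hd0' | hd0'
  · have hab : a = b := by
      have : dist a b = 0 := hd0'.symm
      exact dist_eq_zero.mp this
    have hr : r₁ = r₂ := by
      have : d = 0 := hd0'.symm
      linarith
    refine ⟨a + r₁, ?_, ?_⟩
    · simp [Complex.dist_eq, Complex.norm_of_nonneg h1.le, abs_of_pos h1]
    · rw [← hab, ← hr]
      simp [Complex.dist_eq, abs_of_pos h1]
  · set t : ℝ := (d ^ 2 + r₁ ^ 2 - r₂ ^ 2) / (2 * d) with htdef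
    have hs2 : 0 ≤ r₁ ^ 2 - t ^ 2 := by
      have h : (2 * d) ^ 2 * (r₁ ^ 2 - t ^ 2) = ((d + r₁) ^ 2 - r₂ ^ 2) * (r₂ ^ 2 - (d - r₁) ^ 2) := by
        rw [htdef]
        field_simp
        ring
      have f1 : 0 ≤ (d + r₁) ^ 2 - r₂ ^ 2 := by nlinarith
      have f2 : 0 ≤ r₂ ^ 2 - (d - r₁) ^ 2 := by nlinarith
      nlinarith [mul_nonneg f1 f2, mul_pos hd0' hd0']
    set s : ℝ := Real.sqrt (r₁ ^ 2 - t ^ 2) with hsdef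
    have hs' : s ^ 2 = r₁ ^ 2 - t ^ 2 := Real.sq_sqrt hs2
    have hba : ‖b - a‖ = d := by rw [hddef, dist_comm, Complex.dist_eq]
    have hba0 : b - a ≠ 0 := by
      intro h
      rw [h] at hba
      simp at hba
      linarith
    refine ⟨a + (b - a) / d * (t + s * Complex.I), ?_, ?_⟩
    · rw [Complex.dist_eq]
      have : a + (b - a) / d * (t + s * Complex.I) - a = (b - a) / d * (t + s * Complex.I) := by ring
      rw [this, norm_mul, norm_div, hba]
      simp only [Complex.norm_real, Real.norm_eq_abs, abs_of_pos hd0']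
      rw [div_self (ne_of_gt hd0'), one_mul]
      have : ‖(t : ℂ) + s * Complex.I‖ = Real.sqrt (t ^ 2 + s ^ 2) := by
        rw [Complex.norm_def, Complex.normSq_apply]
        norm_num [Complex.add_re, Complex.add_im]
        ring_nf
      rw [this, hs']
      rw [show t ^ 2 + (r₁ ^ 2 - t ^ 2) = r₁ ^ 2 by ring]
      exact Real.sqrt_sq h1.le
    · rw [Complex.dist_eq]
      have key : a + (b - a) / d * (t + s * Complex.I) - b = (b - a) / d * ((t - d) + s * Complex.I) := by
        have : ((d : ℂ)) ≠ 0 := by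
          simp only [ne_eq, Complex.ofReal_eq_zero]
          exact ne_of_gt hd0'
        field_simp
        ring
      rw [key, norm_mul, norm_div, hba]
      simp only [Complex.norm_real, Real.norm_eq_abs, abs_of_pos hd0']
      rw [div_self (ne_of_gt hd0'), one_mul]
      have habs : ‖((t - d : ℝ) : ℂ) + s * Complex.I‖ = Real.sqrt ((t - d) ^ 2 + s ^ 2) := by
        rw [Complex.norm_def, Complex.normSq_apply]
        norm_num
        ring_nf
      rw [show ((t : ℂ) - (d : ℂ)) = (((t - d : ℝ)) : ℂ) by push_cast; ring]
      rw [habs]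
      have : (t - d) ^ 2 + s ^ 2 = r₂ ^ 2 := by
        rw [hs', htdef]
        field_simp
        ring
      rw [this]
      exact Real.sqrt_sq h2.le

/-- In a finite nonempty family of pairwise non-nested circles that pairwise
are either disjoint or orthogonal, a circle of minimum radius is orthogonal to
at most 6 other circles of the family. -/
theorem min_radius_circle_few_orthogonal_neighbours
    (A : Finset (EuclideanSpace ℝ (Fin 2) × ℝ))
    (hpos : ∀ p ∈ A, 0 < p.2)
    (hnonnested : ∀ p ∈ A, ∀ q ∈ A, p ≠ q →
      ¬ Metric.closedBall p.1 p.2 ⊆ Metric.closedBall q.1 q.2)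
    (harr : ∀ p ∈ A, ∀ q ∈ A, p ≠ q →
      Disjoint (Metric.sphere p.1 p.2) (Metric.sphere q.1 q.2) ∨
      p.2 ^ 2 + q.2 ^ 2 = dist p.1 q.1 ^ 2)
    (α : EuclideanSpace ℝ (Fin 2) × ℝ) (hα : α ∈ A)
    (hmin : ∀ p ∈ A, α.2 ≤ p.2) :
    (A.filter fun p => p ≠ α ∧ α.2 ^ 2 + p.2 ^ 2 = dist α.1 p.1 ^ 2).card ≤ 6 := by
  classical
  set S := A.filter fun p => p ≠ α ∧ α.2 ^ 2 + p.2 ^ 2 = dist α.1 p.1 ^ 2 with hSdef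
  obtain ⟨f⟩ : Nonempty (EuclideanSpace ℝ (Fin 2) ≃ₗᵢ[ℝ] ℂ) :=
    ⟨(Complex.isometryOfOrthonormal (EuclideanSpace.basisFun (Fin 2) ℝ)).symm⟩
  have hr0 : 0 < α.2 := hpos α hα
  set u : (EuclideanSpace ℝ (Fin 2) × ℝ) → ℂ := fun p => f p.1 - f α.1 with hudef
  have hmem : ∀ p ∈ S, p ∈ A ∧ p ≠ α ∧ α.2 ^ 2 + p.2 ^ 2 = dist α.1 p.1 ^ 2 := by
    intro p hp
    rw [hSdef, Finset.mem_filter] at hp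
    exact ⟨hp.1, hp.2.1, hp.2.2⟩
  have habs : ∀ p ∈ S, ‖u p‖ = dist α.1 p.1 := by
    intro p hp
    rw [hudef]
    simp only
    rw [← Complex.dist_eq, f.dist_map, dist_comm]
  have habs2 : ∀ p ∈ S, ‖u p‖ ^ 2 = α.2 ^ 2 + p.2 ^ 2 := by
    intro p hp
    rw [habs p hp, (hmem p hp).2.2]
  have hne0 : ∀ p ∈ S, u p ≠ 0 := by
    intro p hp h0
    have := habs2 p hp
    rw [h0] at this
    simp at this
    have := hpos p (hmem p hp).1
    nlinarith
  -- the key angular estimate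
  have key : ∀ p ∈ S, ∀ q ∈ S, p ≠ q →
      Real.cos (Complex.arg (u p) - Complex.arg (u q)) ≤ 1 / 2 := by
    intro p hp q hq hpq
    obtain ⟨hpA, hpα, hporth⟩ := hmem p hp
    obtain ⟨hqA, hqα, hqorth⟩ := hmem q hq
    have hp2 : 0 < p.2 := hpos p hpA
    have hq2 : 0 < q.2 := hpos q hqA
    have hpmin : α.2 ≤ p.2 := hmin p hpA
    have hqmin : α.2 ≤ q.2 := hmin q hqA
    set D : ℝ := (u p).re * (u q).re + (u p).im * (u q).im with hDdef
    have hsub : u p - u q = f p.1 - f q.1 := by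
      rw [hudef]; ring
    have hdistpq : dist p.1 q.1 = ‖u p - u q‖ := by
      rw [hsub, ← Complex.dist_eq, f.dist_map]
    have hdist2 : dist p.1 q.1 ^ 2 =
        ‖u p‖ ^ 2 + ‖u q‖ ^ 2 - 2 * D := by
      rw [hdistpq, Complex.sq_norm, Complex.sq_norm, Complex.sq_norm,
        Complex.normSq_apply, Complex.normSq_apply, Complex.normSq_apply,
        Complex.sub_re, Complex.sub_im, hDdef]
      ring
    have hDle : D ≤ α.2 ^ 2 := by
      rcases harr p hpA q hqA hpq with hdisj | horth
      · -- the spheres are disjoint; together with non-nesting they are far apart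
        have hgt : p.2 + q.2 < dist p.1 q.1 := by
          by_contra hle
          push_neg at hle
          have t1 : q.2 < p.2 + dist p.1 q.1 := by
            by_contra ht
            push_neg at ht
            exact hnonnested p hpA q hqA hpq
              (Metric.closedBall_subset_closedBall' (by rw [dist_comm] at ht ⊢; linarith))
          have t2 : p.2 < q.2 + dist p.1 q.1 := by
            by_contra ht
            push_neg at ht
            exact hnonnested q hqA p hpA (Ne.symm hpq)
              (Metric.closedBall_subset_closedBall' (by rw [dist_comm]; linarith))
          have hdf : dist (f p.1) (f q.1) = dist p.1 q.1 := f.dist_map _ _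
          obtain ⟨x, hx1, hx2⟩ := circles_intersect (f p.1) (f q.1) p.2 q.2 hp2 hq2
            (by rw [hdf]; linarith) (by rw [hdf]; linarith) (by rw [hdf]; linarith)
          have hy1 : f.symm x ∈ Metric.sphere p.1 p.2 := by
            rw [Metric.mem_sphere]
            rw [← f.dist_map, f.apply_symm_apply]
            exact hx1
          have hy2 : f.symm x ∈ Metric.sphere q.1 q.2 := by
            rw [Metric.mem_sphere]
            rw [← f.dist_map, f.apply_symm_apply]
            exact hx2
          exact Set.disjoint_left.mp hdisj hy1 hy2
        have h1 := habs2 p hp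
        have h2 := habs2 q hq
        nlinarith
      · have h1 := habs2 p hp
        have h2 := habs2 q hq
        nlinarith
    have hxnn : 0 ≤ ‖u p‖ := norm_nonneg _
    have hynn : 0 ≤ ‖u q‖ := norm_nonneg _
    have hx2 : 2 * α.2 ^ 2 ≤ ‖u p‖ ^ 2 := by
      rw [habs2 p hp]; nlinarith
    have hy2 : 2 * α.2 ^ 2 ≤ ‖u q‖ ^ 2 := by
      rw [habs2 q hq]; nlinarith
    have hprod : 2 * α.2 ^ 2 ≤ ‖u p‖ * ‖u q‖ := by
      nlinarith [mul_nonneg hxnn hynn, sq_nonneg (‖u p‖ * ‖u q‖)]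
    have hprodpos : 0 < ‖u p‖ * ‖u q‖ := by nlinarith
    have hcos : Real.cos (Complex.arg (u p) - Complex.arg (u q)) =
        D / (‖u p‖ * ‖u q‖) := by
      rw [Real.cos_sub, Complex.cos_arg (hne0 p hp), Complex.cos_arg (hne0 q hq),
        Complex.sin_arg, Complex.sin_arg, div_mul_div_comm, div_mul_div_comm,
        ← add_div, hDdef]
    rw [hcos, div_le_iff₀ hprodpos]
    linarith
  -- binning the arguments into six sectors
  have hπ : (0:ℝ) < Real.pi := Real.pi_pos
  set g : (EuclideanSpace ℝ (Fin 2) × ℝ) → ℤ :=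
    fun p => ⌈Complex.arg (u p) * 3 / Real.pi⌉ with hgdef
  have hcard : S.card ≤ (Finset.Icc (-2 : ℤ) 3).card := by
    apply Finset.card_le_card_of_injOn g
    · intro p hp
      rw [Finset.mem_coe, Finset.mem_Icc]
      constructor
      · have h1 : (-3 : ℝ) < Complex.arg (u p) * 3 / Real.pi := by
          rw [lt_div_iff₀ hπ]
          nlinarith [Complex.neg_pi_lt_arg (u p)]
        have h2 : (-3 : ℤ) < g p := by
          rw [hgdef]
          exact_mod_cast Int.lt_ceil.mpr (by exact_mod_cast h1)
        omega
      · rw [hgdef]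
        apply Int.ceil_le.mpr
        push_cast
        rw [div_le_iff₀ hπ]
        nlinarith [Complex.arg_le_pi (u p)]
    · intro p hp q hq hgpq
      by_contra hpq
      have hp' : p ∈ S := hp
      have hq' : q ∈ S := hq
      set x : ℝ := Complex.arg (u p) * 3 / Real.pi with hxdef
      set y : ℝ := Complex.arg (u q) * 3 / Real.pi with hydef
      have e1 : x ≤ (g p : ℝ) := Int.le_ceil x
      have e2 : ((g p : ℤ) : ℝ) < x + 1 := Int.ceil_lt_add_one x
      have e3 : y ≤ (g q : ℝ) := Int.le_ceil y
      have e4 : ((g q : ℤ) : ℝ) < y + 1 := Int.ceil_lt_add_one y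
      have hgr : ((g p : ℤ) : ℝ) = ((g q : ℤ) : ℝ) := by rw [hgpq]
      have hxy : |x - y| < 1 := by
        rw [abs_sub_lt_iff]
        constructor <;> linarith
      have hargdiff : |Complex.arg (u p) - Complex.arg (u q)| < Real.pi / 3 := by
        have : x - y = (Complex.arg (u p) - Complex.arg (u q)) * 3 / Real.pi := by
          rw [hxdef, hydef]; ring
        rw [this] at hxy
        rw [abs_div, abs_mul] at hxy
        rw [abs_of_pos hπ] at hxy
        rw [div_lt_one hπ] at hxy
        rw [abs_of_nonneg (by norm_num : (0:ℝ) ≤ 3)] at hxy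
        linarith [abs_nonneg (Complex.arg (u p) - Complex.arg (u q))]
      have hcosgt : 1 / 2 < Real.cos (Complex.arg (u p) - Complex.arg (u q)) := by
        rw [← Real.cos_pi_div_three, ← Real.cos_abs (Complex.arg (u p) - Complex.arg (u q))]
        exact Real.cos_lt_cos_of_nonneg_of_le_pi (abs_nonneg _) (by linarith) hargdiff
      have := key p hp' q hq' hpq
      linarith
  have : (Finset.Icc (-2 : ℤ) 3).card = 6 := by decide
  omega
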